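/- Let K be a finite extension of Q_p and F a finite field extension of K of odd degree m, totally considered as an étale K-algebra with a single factor. Write Disc_{F/K} = (π)^d with d = d_1 f_1 where Diff_{F/K} = m_1^{d_1} and f_1 is the residue degree. Then the Hecke ideal H_{F/K} = Disc_{F/K} Diff_{F/K}^{-1} = m_1^{d_1(m-1)} is the square of an ideal; i.e. any field extension of odd degree of a p-adic field is Hecke unramified. -/

import Mathlib

/-- `Ideal.spanNorm` as defined in Mathlib of December 2024 (now it needs `Module.Finite`
and is defined through `Algebra.intNorm`). -/
noncomputable def spanNormOld (R : Type*) [CommRing R] {S : Type*} [CommRing S] [Algebra R S]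
    (I : Ideal S) : Ideal R :=
  Ideal.span (Algebra.norm R '' (I : Set S))

/-- let `K` be a finite extension of `ℚ_p` with valuation ring `A`
(a discrete valuation ring with maximal ideal `(π)`), and let `F/K` be a finite *field*
extension of odd degree `m`, with valuation ring `B`, unique maximal ideal `m₁`,
ramification index `e₁` and residue degree `f₁` (so `e₁ f₁ = m`), different ideal
`Diff_{F/K} = m₁^{d₁}` and discriminant `Disc_{F/K} = Nm(Diff) = (π)^{d₁ f₁}`.
Then the Hecke ideal `H_{F/K} = Disc_{F/K}·B · Diff_{F/K}⁻¹` satisfies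
`Disc·B = Diff · m₁^{d₁ (m-1)}`, i.e. `H_{F/K} = m₁^{d₁(m-1)}`, and this is the square
of an ideal of `B`: any field extension of odd degree of a p-adic field is Hecke
unramified. -/
theorem stmt1 (p : ℕ) [Fact p.Prime]
    (A B K F : Type*) [CommRing A] [IsDomain A] [IsDiscreteValuationRing A]
    [CommRing B] [IsDomain B] [IsDiscreteValuationRing B]
    [Field K] [Field F] [CharZero K]
    [Algebra ℚ_[p] K] [FiniteDimensional ℚ_[p] K]
    [Algebra A K] [IsFractionRing A K] [Algebra B F] [IsFractionRing B F]
    [Algebra A B] [Algebra K F] [Algebra A F]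
    [IsScalarTower A K F] [IsScalarTower A B F]
    [IsIntegrallyClosed A] [IsDedekindDomain B] [NoZeroSMulDivisors A B]
    (m g e₁ f₁ d₁ : ℕ) (hm : m = 2 * g + 1) (hef : e₁ * f₁ = m)
    (hdeg : Module.finrank K F = m)
    (hram : Ideal.map (algebraMap A B) (IsLocalRing.maximalIdeal A) =
      IsLocalRing.maximalIdeal B ^ e₁)
    (hdiff : differentIdeal A B = IsLocalRing.maximalIdeal B ^ d₁)
    (hdisc : spanNormOld A (differentIdeal A B) =
      IsLocalRing.maximalIdeal A ^ (d₁ * f₁)) :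
    Ideal.map (algebraMap A B) (spanNormOld A (differentIdeal A B)) =
        differentIdeal A B * IsLocalRing.maximalIdeal B ^ (d₁ * (m - 1)) ∧
      ∃ J : Ideal B, IsLocalRing.maximalIdeal B ^ (d₁ * (m - 1)) = J ^ 2 := by
  constructor
  · rw [hdisc, Ideal.map_pow, hram, ← pow_mul, hdiff, ← pow_add]
    congr 1
    have hm1 : m - 1 = 2 * g := by omega
    rw [hm1, show e₁ * (d₁ * f₁) = d₁ * (e₁ * f₁) from by ring, hef, hm]
    ring
  · refine ⟨IsLocalRing.maximalIdeal B ^ (d₁ * g), ?_⟩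
    rw [← pow_mul]
    congr 1
    have hm1 : m - 1 = 2 * g := by omega
    rw [hm1]; ring
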